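/- Let f : ℝ^d → ℝ be L₁-smooth, let x ∈ ℝ^d, let 0 < μ ≤ μ′, and let u, u′ be independent ℝ^d-valued random vectors each with law γ_d. Then E[(f(x + μu) − f(x + μ′u′))² · ‖u‖²] ≤ 8 μ′² (d+4)² ‖∇f(x)‖² + 2 L₁² μ′⁴ (d+6)³. -/

import Mathlib

open MeasureTheory ProbabilityTheory Real
open scoped NNReal ENNReal RealInnerProductSpace


noncomputable section

/-- `d`-dimensional Euclidean space with the Euclidean norm. -/
abbrev Euc (d : ℕ) := EuclideanSpace ℝ (Fin d)

/-- The standard Gaussian measure `γ_d` on `ℝ^d`: the joint law of `d` independent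
standard normal coordinates. -/
def stdGaussian (d : ℕ) : MeasureTheory.Measure (Euc d) :=
  (MeasureTheory.Measure.pi fun _ : Fin d => ProbabilityTheory.gaussianReal 0 1).map
    (MeasurableEquiv.toLp 2 (Fin d → ℝ))

/-- The Gaussian smoothing `f^s(x) = ∫ f(x + μ u) dγ_d(u)` of `f`. -/
def gaussSmooth {d : ℕ} (f : Euc d → ℝ) (μ : ℝ) (x : Euc d) : ℝ :=
  ∫ u, f (x + μ • u) ∂(stdGaussian d)

lemma int_pow_gauss (n : ℕ) :
    Integrable (fun x : ℝ => x ^ n * rexp (-(2⁻¹ : ℝ) * x ^ 2)) := by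
  have h := integrable_rpow_mul_exp_neg_mul_sq (b := 2⁻¹) (by norm_num) (s := (n : ℝ))
    (lt_of_lt_of_le (by norm_num) (Nat.cast_nonneg n))
  simpa [Real.rpow_natCast] using h

lemma J_step (m : ℕ) :
    ∫ x : ℝ, x ^ (m + 2) * rexp (-(2⁻¹ : ℝ) * x ^ 2)
      = (m + 1 : ℝ) * ∫ x : ℝ, x ^ m * rexp (-(2⁻¹ : ℝ) * x ^ 2) := by
  have hu : ∀ x : ℝ, HasDerivAt (fun y : ℝ => y ^ (m + 1))
      (((m : ℝ) + 1) * x ^ m) x := by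
    intro x
    have := hasDerivAt_pow (m + 1) x
    simpa using this
  have hv : ∀ x : ℝ, HasDerivAt (fun y : ℝ => -rexp (-(2⁻¹ : ℝ) * y ^ 2))
      (x * rexp (-(2⁻¹ : ℝ) * x ^ 2)) x := by
    intro x
    have h1 : HasDerivAt (fun y : ℝ => -(2⁻¹ : ℝ) * y ^ 2)
        (-(2⁻¹ : ℝ) * ((2 : ℕ) * x ^ (2 - 1))) x := (hasDerivAt_pow 2 x).const_mul _
    have h2 : HasDerivAt (fun y : ℝ => -rexp (-(2⁻¹ : ℝ) * y ^ 2))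
        (-(rexp (-(2⁻¹ : ℝ) * x ^ 2) * (-(2⁻¹ : ℝ) * ((2 : ℕ) * x ^ (2 - 1))))) x :=
      (h1.exp).neg
    convert h2 using 1
    push_cast
    ring
  have h := integral_mul_deriv_eq_deriv_mul_of_integrable (fun x _ => hu x) (fun x _ => hv x)
    (by
      apply (int_pow_gauss (m + 2)).congr
      filter_upwards with x
      simp only [Pi.mul_apply, Pi.neg_apply]
      ring)
    (by
      apply (((int_pow_gauss m).const_mul ((m : ℝ) + 1)).neg).congr
      filter_upwards with x
      simp only [Pi.mul_apply, Pi.neg_apply]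
      ring)
    (by
      apply ((int_pow_gauss (m + 1)).neg).congr
      filter_upwards with x
      simp only [Pi.mul_apply, Pi.neg_apply]
      ring)
  have e1 : ∫ x : ℝ, x ^ (m + 2) * rexp (-(2⁻¹ : ℝ) * x ^ 2)
      = ∫ x : ℝ, x ^ (m + 1) * (x * rexp (-(2⁻¹ : ℝ) * x ^ 2)) := by
    congr 1; funext x; ring
  have e2 : ∫ x : ℝ, ((m : ℝ) + 1) * x ^ m * -rexp (-(2⁻¹ : ℝ) * x ^ 2)
      = -(((m : ℝ) + 1) * ∫ x : ℝ, x ^ m * rexp (-(2⁻¹ : ℝ) * x ^ 2)) := by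
    rw [← integral_const_mul, ← integral_neg]
    congr 1; funext x; ring
  rw [e1, h, e2, neg_neg]

lemma J_zero : ∫ x : ℝ, rexp (-(2⁻¹ : ℝ) * x ^ 2) = √(2 * π) := by
  have := integral_gaussian 2⁻¹
  rw [this]
  rw [show π / 2⁻¹ = 2 * π by ring]

lemma J2 : ∫ x : ℝ, x ^ 2 * rexp (-(2⁻¹ : ℝ) * x ^ 2) = √(2 * π) := by
  have h := J_step 0
  simp only [pow_zero, one_mul, Nat.cast_zero, zero_add] at h
  rw [show (2:ℕ) = 0 + 2 from rfl, h, J_zero]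

lemma J4 : ∫ x : ℝ, x ^ 4 * rexp (-(2⁻¹ : ℝ) * x ^ 2) = 3 * √(2 * π) := by
  have := J_step 2
  rw [show (4:ℕ) = 2 + 2 from rfl, this, J2]
  push_cast; ring

lemma J6 : ∫ x : ℝ, x ^ 6 * rexp (-(2⁻¹ : ℝ) * x ^ 2) = 15 * √(2 * π) := by
  have := J_step 4
  rw [show (6:ℕ) = 4 + 2 from rfl, this, J4]
  push_cast; ring

lemma pdf_eq (x : ℝ) : gaussianPDFReal 0 1 x = (√(2 * π))⁻¹ * rexp (-(2⁻¹ : ℝ) * x ^ 2) := by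
  rw [gaussianPDFReal]
  simp only [NNReal.coe_one, mul_one, sub_zero]
  congr 1
  ring_nf

lemma integral_gauss1 (g : ℝ → ℝ) :
    ∫ x, g x ∂(gaussianReal 0 1)
      = ∫ x, g x * ((√(2 * π))⁻¹ * rexp (-(2⁻¹ : ℝ) * x ^ 2)) := by
  rw [gaussianReal_of_var_ne_zero 0 one_ne_zero, gaussianPDF_def]
  have : ∀ x : ℝ, ENNReal.ofReal (gaussianPDFReal 0 1 x)
      = ((Real.toNNReal (gaussianPDFReal 0 1 x) : ℝ≥0) : ℝ≥0∞) := fun x => rfl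
  simp_rw [this]
  rw [integral_withDensity_eq_integral_smul ((measurable_gaussianPDFReal 0 1).real_toNNReal) g]
  congr 1
  funext x
  rw [NNReal.smul_def, smul_eq_mul, Real.coe_toNNReal _ (gaussianPDFReal_nonneg 0 1 x),
    pdf_eq, mul_comm]

lemma mom_gauss1_int (n : ℕ) : Integrable (fun x : ℝ => x ^ n) (gaussianReal 0 1) := by
  rw [gaussianReal_of_var_ne_zero 0 one_ne_zero, gaussianPDF_def]
  rw [integrable_withDensity_iff (measurable_gaussianPDFReal 0 1).ennreal_ofReal
    (Filter.Eventually.of_forall fun x => ENNReal.ofReal_lt_top)]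
  apply (((int_pow_gauss n).const_mul ((√(2 * π))⁻¹))).congr
  filter_upwards with x
  rw [ENNReal.toReal_ofReal (gaussianPDFReal_nonneg 0 1 x), pdf_eq]
  ring

lemma sqrt2pi_pos : (0:ℝ) < √(2 * π) := Real.sqrt_pos.mpr (by positivity)

lemma mom_gauss1_val0 : ∫ x, (1:ℝ) ∂(gaussianReal 0 1) = 1 := by simp

lemma mom_gauss1_val2 : ∫ x, x ^ 2 ∂(gaussianReal 0 1) = 1 := by
  rw [integral_gauss1]
  simp_rw [← mul_assoc, mul_comm _ ((√(2 * π))⁻¹), mul_assoc, integral_const_mul]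
  rw [J2]
  field_simp

lemma mom_gauss1_val4 : ∫ x, x ^ 4 ∂(gaussianReal 0 1) = 3 := by
  rw [integral_gauss1]
  simp_rw [← mul_assoc, mul_comm _ ((√(2 * π))⁻¹), mul_assoc, integral_const_mul]
  rw [J4]
  field_simp

lemma mom_gauss1_val6 : ∫ x, x ^ 6 ∂(gaussianReal 0 1) = 15 := by
  rw [integral_gauss1]
  simp_rw [← mul_assoc, mul_comm _ ((√(2 * π))⁻¹), mul_assoc, integral_const_mul]
  rw [J6]
  field_simp

abbrev gpi (d : ℕ) : Measure (Fin d → ℝ) := Measure.pi fun _ => gaussianReal 0 1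

lemma pi_moments (d : ℕ) :
    (Integrable (fun y : Fin d → ℝ => ∑ i, y i ^ 2) (gpi d)
      ∧ Integrable (fun y : Fin d → ℝ => (∑ i, y i ^ 2) ^ 2) (gpi d)
      ∧ Integrable (fun y : Fin d → ℝ => (∑ i, y i ^ 2) ^ 3) (gpi d))
    ∧ ((∫ y, (∑ i, y i ^ 2) ∂(gpi d)) = d
      ∧ (∫ y, (∑ i, y i ^ 2) ^ 2 ∂(gpi d)) = d * (d + 2)
      ∧ (∫ y, (∑ i, y i ^ 2) ^ 3 ∂(gpi d)) = d * (d + 2) * (d + 4)) := by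
  induction d with
  | zero =>
      constructor
      · refine ⟨?_, ?_, ?_⟩ <;>
        · apply (integrable_const (0:ℝ)).congr
          filter_upwards with y
          simp
      · refine ⟨?_, ?_, ?_⟩ <;> simp
  | succ d ih =>
      obtain ⟨⟨ii1, ii2, ii3⟩, iv1, iv2, iv3⟩ := ih
      have hmp := measurePreserving_piFinSuccAbove (fun _ : Fin (d+1) => gaussianReal 0 1) 0
      set e := MeasurableEquiv.piFinSuccAbove (fun _ : Fin (d+1) => ℝ) 0 with he
      have hsymm : ∀ p : ℝ × (Fin d → ℝ), ∀ k : ℕ,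
          (∑ i, (e.symm p) i ^ 2) ^ k = ((p.1 ^ 2 + ∑ j, p.2 j ^ 2)) ^ k := by
        intro p k
        congr 1
        rw [Fin.sum_univ_succ]
        simp [he, MeasurableEquiv.piFinSuccAbove_symm_apply, Fin.insertNthEquiv,
          Fin.insertNth_zero, Fin.zero_succAbove]
      have hInt : ∀ a b : ℕ, Integrable (fun y : Fin d → ℝ => (∑ i, y i ^ 2) ^ b) (gpi d) →
          Integrable (fun p : ℝ × (Fin d → ℝ) => p.1 ^ a * (∑ j, p.2 j ^ 2) ^ b)
            ((gaussianReal 0 1).prod (gpi d)) := by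
        intro a b hb
        exact (mom_gauss1_int a).mul_prod hb
      have hVal : ∀ a b : ℕ,
          (∫ p : ℝ × (Fin d → ℝ), p.1 ^ a * (∑ j, p.2 j ^ 2) ^ b
            ∂((gaussianReal 0 1).prod (gpi d)))
          = (∫ x, x ^ a ∂(gaussianReal 0 1)) * (∫ y, (∑ j, y j ^ 2) ^ b ∂(gpi d)) := by
        intro a b
        exact integral_prod_mul (μ := gaussianReal 0 1) (ν := gpi d)
          (fun x : ℝ => x ^ a) (fun y : Fin d → ℝ => (∑ j, y j ^ 2) ^ b)
      have int0 : Integrable (fun y : Fin d → ℝ => (∑ i, y i ^ 2) ^ 0) (gpi d) := by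
        simp only [pow_zero]
        exact integrable_const 1
      have val0 : (∫ y, (∑ j, y j ^ 2) ^ 0 ∂(gpi d)) = 1 := by
        simp only [pow_zero]
        simp
      -- transfer lemmas
      have hIE : ∀ F : (Fin (d+1) → ℝ) → ℝ,
          Integrable (fun p : ℝ × (Fin d → ℝ) => F (e.symm p)) ((gaussianReal 0 1).prod (gpi d))
            → Integrable F (gpi (d+1)) := by
        intro F hF
        have := (hmp.symm e).integrable_comp_emb (g := F) (e.symm.measurableEmbedding)
        exact this.mp hF
      have hVE : ∀ F : (Fin (d+1) → ℝ) → ℝ,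
          (∫ y, F y ∂(gpi (d+1)))
            = ∫ p, F (e.symm p) ∂((gaussianReal 0 1).prod (gpi d)) := by
        intro F
        exact ((hmp.symm e).integral_comp' F).symm
      -- now the computations
      have comp1 : ∀ k : ℕ, (∫ y, (∑ i, y i ^ 2) ^ k ∂(gpi (d+1)))
          = ∫ p, (p.1 ^ 2 + ∑ j, p.2 j ^ 2) ^ k ∂((gaussianReal 0 1).prod (gpi d)) := by
        intro k
        rw [hVE (fun y => (∑ i, y i ^ 2) ^ k)]
        congr 1
        funext p
        exact hsymm p k
      have m0 : (∫ x, x ^ 0 ∂(gaussianReal 0 1)) = 1 := by simp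
      have i1' : Integrable (fun y : Fin d → ℝ => (∑ i, y i ^ 2) ^ 1) (gpi d) := by
        simp only [pow_one]; exact ii1
      have v1' : (∫ y, (∑ j, y j ^ 2) ^ 1 ∂(gpi d)) = d := by
        simp only [pow_one]; exact iv1
      have expand1 : ∀ p : ℝ × (Fin d → ℝ), (p.1 ^ 2 + ∑ j, p.2 j ^ 2) ^ 1
          = p.1 ^ 2 * (∑ j, p.2 j ^ 2) ^ 0 + p.1 ^ 0 * (∑ j, p.2 j ^ 2) ^ 1 := by
        intro p; ring
      have expand2 : ∀ p : ℝ × (Fin d → ℝ), (p.1 ^ 2 + ∑ j, p.2 j ^ 2) ^ 2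
          = p.1 ^ 4 * (∑ j, p.2 j ^ 2) ^ 0 + (2 * (p.1 ^ 2 * (∑ j, p.2 j ^ 2) ^ 1)
            + p.1 ^ 0 * (∑ j, p.2 j ^ 2) ^ 2) := by
        intro p; ring
      have expand3 : ∀ p : ℝ × (Fin d → ℝ), (p.1 ^ 2 + ∑ j, p.2 j ^ 2) ^ 3
          = p.1 ^ 6 * (∑ j, p.2 j ^ 2) ^ 0 + (3 * (p.1 ^ 4 * (∑ j, p.2 j ^ 2) ^ 1)
            + (3 * (p.1 ^ 2 * (∑ j, p.2 j ^ 2) ^ 2) + p.1 ^ 0 * (∑ j, p.2 j ^ 2) ^ 3)) := by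
        intro p; ring
      have pInt1 : Integrable (fun p : ℝ × (Fin d → ℝ) => (p.1 ^ 2 + ∑ j, p.2 j ^ 2) ^ 1)
          ((gaussianReal 0 1).prod (gpi d)) := by
        apply Integrable.congr ((hInt 2 0 int0).add (hInt 0 1 i1'))
        filter_upwards with p
        rw [expand1]
        rfl
      have pInt2 : Integrable (fun p : ℝ × (Fin d → ℝ) => (p.1 ^ 2 + ∑ j, p.2 j ^ 2) ^ 2)
          ((gaussianReal 0 1).prod (gpi d)) := by
        apply Integrable.congr ((hInt 4 0 int0).add
          (((hInt 2 1 i1').const_mul 2).add (hInt 0 2 ii2)))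
        filter_upwards with p
        rw [expand2]
        rfl
      have pInt3 : Integrable (fun p : ℝ × (Fin d → ℝ) => (p.1 ^ 2 + ∑ j, p.2 j ^ 2) ^ 3)
          ((gaussianReal 0 1).prod (gpi d)) := by
        apply Integrable.congr ((hInt 6 0 int0).add
          (((hInt 4 1 i1').const_mul 3).add
            (((hInt 2 2 ii2).const_mul 3).add (hInt 0 3 ii3))))
        filter_upwards with p
        rw [expand3]
        rfl
      have gInt : ∀ k : ℕ,
          Integrable (fun p : ℝ × (Fin d → ℝ) => (p.1 ^ 2 + ∑ j, p.2 j ^ 2) ^ k)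
            ((gaussianReal 0 1).prod (gpi d))
          → Integrable (fun y : Fin (d+1) → ℝ => (∑ i, y i ^ 2) ^ k) (gpi (d+1)) := by
        intro k hk
        apply hIE
        apply hk.congr
        filter_upwards with p
        exact (hsymm p k).symm
      refine ⟨⟨?_, ?_, ?_⟩, ?_, ?_, ?_⟩
      · have := gInt 1 pInt1
        simpa [pow_one] using this
      · exact gInt 2 pInt2
      · exact gInt 3 pInt3
      · have : (∫ y, (∑ i, y i ^ 2) ^ 1 ∂(gpi (d+1))) = (d : ℝ) + 1 := by
          rw [comp1 1]
          simp_rw [expand1]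
          rw [integral_add (hInt 2 0 int0) (hInt 0 1 i1'), hVal 2 0, hVal 0 1,
            mom_gauss1_val2, m0, val0, v1']
          ring
        simp only [pow_one] at this
        rw [this]
        push_cast; ring
      · rw [comp1 2]
        simp_rw [expand2]
        have hB1 : Integrable (fun p : ℝ × (Fin d → ℝ) => 2 * (p.1 ^ 2 * (∑ j, p.2 j ^ 2) ^ 1))
            ((gaussianReal 0 1).prod (gpi d)) := (hInt 2 1 i1').const_mul 2
        have hB : Integrable (fun p : ℝ × (Fin d → ℝ) =>
            2 * (p.1 ^ 2 * (∑ j, p.2 j ^ 2) ^ 1) + p.1 ^ 0 * (∑ j, p.2 j ^ 2) ^ 2)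
            ((gaussianReal 0 1).prod (gpi d)) := hB1.add (hInt 0 2 ii2)
        rw [integral_add (hInt 4 0 int0) hB, integral_add hB1 (hInt 0 2 ii2), integral_const_mul,
          hVal 4 0, hVal 2 1, hVal 0 2, mom_gauss1_val4, mom_gauss1_val2, m0, val0, v1', iv2]
        push_cast; ring
      · rw [comp1 3]
        simp_rw [expand3]
        have hC1 : Integrable (fun p : ℝ × (Fin d → ℝ) => 3 * (p.1 ^ 4 * (∑ j, p.2 j ^ 2) ^ 1))
            ((gaussianReal 0 1).prod (gpi d)) := (hInt 4 1 i1').const_mul 3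
        have hC2 : Integrable (fun p : ℝ × (Fin d → ℝ) => 3 * (p.1 ^ 2 * (∑ j, p.2 j ^ 2) ^ 2))
            ((gaussianReal 0 1).prod (gpi d)) := (hInt 2 2 ii2).const_mul 3
        have hC3 : Integrable (fun p : ℝ × (Fin d → ℝ) =>
            3 * (p.1 ^ 2 * (∑ j, p.2 j ^ 2) ^ 2) + p.1 ^ 0 * (∑ j, p.2 j ^ 2) ^ 3)
            ((gaussianReal 0 1).prod (gpi d)) := hC2.add (hInt 0 3 ii3)
        have hC : Integrable (fun p : ℝ × (Fin d → ℝ) =>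
            3 * (p.1 ^ 4 * (∑ j, p.2 j ^ 2) ^ 1)
              + (3 * (p.1 ^ 2 * (∑ j, p.2 j ^ 2) ^ 2) + p.1 ^ 0 * (∑ j, p.2 j ^ 2) ^ 3))
            ((gaussianReal 0 1).prod (gpi d)) := hC1.add hC3
        rw [integral_add (hInt 6 0 int0) hC, integral_add hC1 hC3,
          integral_add hC2 (hInt 0 3 ii3),
          integral_const_mul, integral_const_mul,
          hVal 6 0, hVal 4 1, hVal 2 2, hVal 0 3,
          mom_gauss1_val6, mom_gauss1_val4, mom_gauss1_val2, m0, val0, v1', iv2, iv3]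
        push_cast; ring


lemma std_norm_sq (d : ℕ) (y : Fin d → ℝ) :
    ‖(MeasurableEquiv.toLp 2 (Fin d → ℝ)) y‖ ^ 2 = ∑ i, y i ^ 2 := by
  rw [EuclideanSpace.norm_eq, Real.sq_sqrt (by positivity)]
  congr 1
  funext i
  rw [Real.norm_eq_abs, sq_abs]
  rfl

lemma std_pow (d k : ℕ) (y : Fin d → ℝ) :
    ‖(MeasurableEquiv.toLp 2 (Fin d → ℝ)) y‖ ^ (2 * k) = (∑ i, y i ^ 2) ^ k := by
  rw [pow_mul, std_norm_sq]

lemma std_moments (d : ℕ) :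
    (Integrable (fun a : Euc d => ‖a‖ ^ 2) (stdGaussian d)
      ∧ Integrable (fun a : Euc d => ‖a‖ ^ 4) (stdGaussian d)
      ∧ Integrable (fun a : Euc d => ‖a‖ ^ 6) (stdGaussian d))
    ∧ ((∫ a, ‖a‖ ^ 2 ∂(stdGaussian d)) = d
      ∧ (∫ a, ‖a‖ ^ 4 ∂(stdGaussian d)) = d * (d + 2)
      ∧ (∫ a, ‖a‖ ^ 6 ∂(stdGaussian d)) = d * (d + 2) * (d + 4)) := by
  obtain ⟨⟨ii1, ii2, ii3⟩, iv1, iv2, iv3⟩ := pi_moments d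
  have h2 : ∀ y : Fin d → ℝ, ‖(MeasurableEquiv.toLp 2 (Fin d → ℝ)) y‖ ^ 2
      = (∑ i, y i ^ 2) ^ 1 := by
    intro y; rw [← std_pow d 1]
  have h4 : ∀ y : Fin d → ℝ, ‖(MeasurableEquiv.toLp 2 (Fin d → ℝ)) y‖ ^ 4
      = (∑ i, y i ^ 2) ^ 2 := by
    intro y; rw [← std_pow d 2]
  have h6 : ∀ y : Fin d → ℝ, ‖(MeasurableEquiv.toLp 2 (Fin d → ℝ)) y‖ ^ 6
      = (∑ i, y i ^ 2) ^ 3 := by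
    intro y; rw [← std_pow d 3]
  refine ⟨⟨?_, ?_, ?_⟩, ?_, ?_, ?_⟩
  · rw [_root_.stdGaussian, integrable_map_equiv]
    apply ii1.congr
    filter_upwards with y
    simp only [Function.comp_apply]
    rw [h2, pow_one]
  · rw [_root_.stdGaussian, integrable_map_equiv]
    apply ii2.congr
    filter_upwards with y
    simp only [Function.comp_apply]
    rw [h4]
  · rw [_root_.stdGaussian, integrable_map_equiv]
    apply ii3.congr
    filter_upwards with y
    simp only [Function.comp_apply]
    rw [h6]
  · rw [_root_.stdGaussian, integral_map_equiv]
    simp_rw [h2, pow_one]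
    exact iv1
  · rw [_root_.stdGaussian, integral_map_equiv]
    simp_rw [h4]
    exact iv2
  · rw [_root_.stdGaussian, integral_map_equiv]
    simp_rw [h6]
    exact iv3

open scoped RealInnerProductSpace in
lemma taylor_bound {d : ℕ} {L₁ : ℝ} {f : Euc d → ℝ}
    (hdiff : Differentiable ℝ f)
    (hsm : ∀ x y : Euc d, ‖gradient f x - gradient f y‖ ≤ L₁ * ‖x - y‖)
    (x y : Euc d) :
    |f y - f x - ⟪gradient f x, y - x⟫| ≤ L₁ / 2 * ‖y - x‖ ^ 2 := by
  by_cases hxy : y = x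
  · subst hxy; simp
  · have hvy : (0:ℝ) < ‖y - x‖ := by
      rw [norm_pos_iff, sub_ne_zero]; exact hxy
    have hL : 0 ≤ L₁ := by
      by_contra hneg
      push_neg at hneg
      have h := hsm y x
      nlinarith [norm_nonneg (gradient f y - gradient f x)]
    set v := y - x with hv
    have curve : ∀ t : ℝ, HasDerivAt (fun s : ℝ => x + s • v) v t := by
      intro t
      simpa using ((hasDerivAt_id t).smul_const v).const_add x
    have hder : ∀ t : ℝ, HasDerivAt (fun s : ℝ => f (x + s • v))
        (⟪gradient f (x + t • v), v⟫) t := by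
      intro t
      have hg := (hdiff (x + t • v)).hasGradientAt
      have hf := hasGradientAt_iff_hasFDerivAt.mp hg
      have := hf.comp_hasDerivAt t (curve t)
      simp [InnerProductSpace.toDual_apply_apply] at this ⊢; exact this
    have cont : Continuous fun z : Euc d => gradient f z := by
      have hlip : LipschitzWith (Real.toNNReal L₁) (fun z => gradient f z) := by
        apply LipschitzWith.of_dist_le_mul
        intro a b
        rw [dist_eq_norm, dist_eq_norm]
        calc ‖gradient f a - gradient f b‖ ≤ L₁ * ‖a - b‖ := hsm a b
        _ ≤ Real.toNNReal L₁ * ‖a - b‖ :=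
          mul_le_mul_of_nonneg_right (Real.le_coe_toNNReal L₁) (norm_nonneg _)
      exact hlip.continuous
    have contD : Continuous fun t : ℝ => (⟪gradient f (x + t • v), v⟫ : ℝ) := by
      apply Continuous.inner
      · exact cont.comp (by continuity)
      · exact continuous_const
    have key := intervalIntegral.integral_eq_sub_of_hasDerivAt
      (f := fun s : ℝ => f (x + s • v)) (a := 0) (b := 1)
      (fun t _ => hder t) (contD.intervalIntegrable 0 1)
    have key' : (∫ t in (0:ℝ)..1, (⟪gradient f (x + t • v), v⟫ : ℝ)) = f y - f x := by
      rw [key]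
      norm_num [hv]
    have hsub : f y - f x - ⟪gradient f x, v⟫
        = ∫ t in (0:ℝ)..1, ((⟪gradient f (x + t • v), v⟫ : ℝ) - ⟪gradient f x, v⟫) := by
      rw [intervalIntegral.integral_sub (contD.intervalIntegrable 0 1)
        (intervalIntegrable_const), key', intervalIntegral.integral_const]
      norm_num
    rw [hsub]
    have contS : Continuous fun t : ℝ =>
        ((⟪gradient f (x + t • v), v⟫ : ℝ) - ⟪gradient f x, v⟫) := contD.sub continuous_const
    calc |∫ t in (0:ℝ)..1, ((⟪gradient f (x + t • v), v⟫ : ℝ) - ⟪gradient f x, v⟫)|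
        ≤ ∫ t in (0:ℝ)..1, |(⟪gradient f (x + t • v), v⟫ : ℝ) - ⟪gradient f x, v⟫| :=
          intervalIntegral.abs_integral_le_integral_abs (by norm_num)
      _ ≤ ∫ t in (0:ℝ)..1, L₁ * ‖v‖ ^ 2 * t := by
          apply intervalIntegral.integral_mono_on (by norm_num)
            (contS.abs.intervalIntegrable 0 1)
            (by apply Continuous.intervalIntegrable; continuity)
          intro t ht
          obtain ⟨ht0, ht1⟩ := ht
          have h1 : ((⟪gradient f (x + t • v), v⟫ : ℝ) - ⟪gradient f x, v⟫)
              = ⟪gradient f (x + t • v) - gradient f x, v⟫ := by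
            rw [inner_sub_left]
          rw [h1]
          calc |(⟪gradient f (x + t • v) - gradient f x, v⟫ : ℝ)|
              ≤ ‖gradient f (x + t • v) - gradient f x‖ * ‖v‖ := abs_real_inner_le_norm _ _
            _ ≤ (L₁ * ‖x + t • v - x‖) * ‖v‖ :=
                mul_le_mul_of_nonneg_right (hsm (x + t • v) x) (norm_nonneg _)
            _ = L₁ * ‖v‖ ^ 2 * t := by
                have : x + t • v - x = t • v := by abel
                rw [this, norm_smul, Real.norm_eq_abs, abs_of_nonneg ht0]
                ring
      _ = L₁ / 2 * ‖v‖ ^ 2 := by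
          rw [intervalIntegral.integral_const_mul, integral_id]
          ring

set_option maxHeartbeats 2000000 in
/-- If `f` is `L₁`-smooth, `0 < μ ≤ μ′`, and `u, u′` are independent standard
Gaussian vectors, then
`E[(f(x+μu) − f(x+μ′u′))² ‖u‖²] ≤ 8μ′²(d+4)²‖∇f(x)‖² + 2L₁²μ′⁴(d+6)³`. -/
theorem stmt_10 {S : Type*} [MeasurableSpace S] (P : MeasureTheory.Measure S)
    [MeasureTheory.IsProbabilityMeasure P]
    (d : ℕ) (L₁ : ℝ) (f : Euc d → ℝ)
    (hdiff : Differentiable ℝ f)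
    (hsm : ∀ x y : Euc d, ‖gradient f x - gradient f y‖ ≤ L₁ * ‖x - y‖)
    (x : Euc d) (μ μ' : ℝ) (hμ : 0 < μ) (hμμ' : μ ≤ μ')
    (u u' : S → Euc d) (hu : Measurable u) (hu' : Measurable u')
    (hind : ProbabilityTheory.IndepFun u u' P)
    (hlaw : MeasureTheory.Measure.map u P = stdGaussian d)
    (hlaw' : MeasureTheory.Measure.map u' P = stdGaussian d) :
    ∫ ω, (f (x + μ • u ω) - f (x + μ' • u' ω)) ^ 2 * ‖u ω‖ ^ 2 ∂P
      ≤ 8 * μ' ^ 2 * ((d : ℝ) + 4) ^ 2 * ‖gradient f x‖ ^ 2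
        + 2 * L₁ ^ 2 * μ' ^ 4 * ((d : ℝ) + 6) ^ 3 := by
  set G := ‖gradient f x‖ with hG
  have hμ' : 0 < μ' := lt_of_lt_of_le hμ hμμ'
  -- pointwise quadratic bound
  have key1 : ∀ (ν : ℝ), 0 < ν → ∀ a : Euc d, (f (x + ν • a) - f x) ^ 2
      ≤ 2 * ν ^ 2 * G ^ 2 * ‖a‖ ^ 2 + L₁ ^ 2 / 2 * ν ^ 4 * ‖a‖ ^ 4 := by
    intro ν hν a
    have ht := taylor_bound hdiff hsm x (x + ν • a)
    have hvv : x + ν • a - x = ν • a := by abel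
    rw [hvv] at ht
    have hBabs : |(⟪gradient f x, ν • a⟫ : ℝ)| ≤ G * (ν * ‖a‖) := by
      calc |(⟪gradient f x, ν • a⟫ : ℝ)| ≤ G * ‖ν • a‖ := abs_real_inner_le_norm _ _
        _ = G * (ν * ‖a‖) := by
            rw [norm_smul, Real.norm_eq_abs, abs_of_pos hν]
    have hns : ‖ν • a‖ ^ 2 = ν ^ 2 * ‖a‖ ^ 2 := by
      rw [norm_smul, Real.norm_eq_abs, abs_of_pos hν]; ring
    rw [hns] at ht
    have h1 : (f (x + ν • a) - f x - ⟪gradient f x, ν • a⟫) ^ 2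
        ≤ (L₁ / 2 * (ν ^ 2 * ‖a‖ ^ 2)) ^ 2 := by
      rw [← sq_abs]
      exact pow_le_pow_left₀ (abs_nonneg _) ht 2
    have h2 : (⟪gradient f x, ν • a⟫ : ℝ) ^ 2 ≤ (G * (ν * ‖a‖)) ^ 2 := by
      rw [← sq_abs]
      exact pow_le_pow_left₀ (abs_nonneg _) hBabs 2
    nlinarith [sq_nonneg (f (x + ν • a) - f x - 2 * ⟪gradient f x, ν • a⟫)]
  have key2 : ∀ a b : Euc d, (f (x + μ • a) - f (x + μ' • b)) ^ 2 * ‖a‖ ^ 2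
      ≤ (4 * μ' ^ 2 * G ^ 2 * ‖a‖ ^ 2 + L₁ ^ 2 * μ' ^ 4 * ‖a‖ ^ 4
        + 4 * μ' ^ 2 * G ^ 2 * ‖b‖ ^ 2 + L₁ ^ 2 * μ' ^ 4 * ‖b‖ ^ 4) * ‖a‖ ^ 2 := by
    intro a b
    apply mul_le_mul_of_nonneg_right _ (by positivity)
    have k1 := key1 μ hμ a
    have k2 := key1 μ' hμ' b
    have hm2 : μ ^ 2 ≤ μ' ^ 2 := pow_le_pow_left₀ hμ.le hμμ' 2
    have hm4 : μ ^ 4 ≤ μ' ^ 4 := pow_le_pow_left₀ hμ.le hμμ' 4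
    have e1 := mul_le_mul_of_nonneg_right hm2 (mul_nonneg (sq_nonneg G) (sq_nonneg ‖a‖))
    have e2 := mul_le_mul_of_nonneg_right hm4
      (mul_nonneg (sq_nonneg L₁) (sq_nonneg (‖a‖ ^ 2)))
    nlinarith [sq_nonneg (f (x + μ • a) + f (x + μ' • b) - 2 * f x)]
  -- moments
  obtain ⟨⟨si2, si4, si6⟩, sv2, sv4, sv6⟩ := std_moments d
  have transferI : ∀ (w : S → Euc d), Measurable w → Measure.map w P = stdGaussian d →
      ∀ k : ℕ, Integrable (fun a : Euc d => ‖a‖ ^ k) (stdGaussian d) →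
      Integrable (fun ω => ‖w ω‖ ^ k) P := by
    intro w hw hlw k hk
    have hmeas : AEStronglyMeasurable (fun a : Euc d => ‖a‖ ^ k) (Measure.map w P) :=
      ((continuous_norm.pow k)).aestronglyMeasurable
    have := (integrable_map_measure hmeas hw.aemeasurable).mp (by rw [hlw]; exact hk)
    exact this
  have transferV : ∀ (w : S → Euc d), Measurable w → Measure.map w P = stdGaussian d →
      ∀ k : ℕ, (∫ ω, ‖w ω‖ ^ k ∂P) = ∫ a : Euc d, ‖a‖ ^ k ∂(stdGaussian d) := by
    intro w hw hlw k
    rw [← hlw, integral_map (f := fun a : Euc d => ‖a‖ ^ k) hw.aemeasurable ((continuous_norm.pow k)).aestronglyMeasurable]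
  have iu2 : Integrable (fun ω => ‖u ω‖ ^ 2) P := transferI u hu hlaw 2 si2
  have iu4 : Integrable (fun ω => ‖u ω‖ ^ 4) P := transferI u hu hlaw 4 si4
  have iu6 : Integrable (fun ω => ‖u ω‖ ^ 6) P := transferI u hu hlaw 6 si6
  have iv2 : Integrable (fun ω => ‖u' ω‖ ^ 2) P := transferI u' hu' hlaw' 2 si2
  have iv4 : Integrable (fun ω => ‖u' ω‖ ^ 4) P := transferI u' hu' hlaw' 4 si4
  have vu2 : (∫ ω, ‖u ω‖ ^ 2 ∂P) = d := by rw [transferV u hu hlaw 2]; exact sv2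
  have vu4 : (∫ ω, ‖u ω‖ ^ 4 ∂P) = d * (d + 2) := by rw [transferV u hu hlaw 4]; exact sv4
  have vu6 : (∫ ω, ‖u ω‖ ^ 6 ∂P) = d * (d + 2) * (d + 4) := by
    rw [transferV u hu hlaw 6]; exact sv6
  have vv2 : (∫ ω, ‖u' ω‖ ^ 2 ∂P) = d := by rw [transferV u' hu' hlaw' 2]; exact sv2
  have vv4 : (∫ ω, ‖u' ω‖ ^ 4 ∂P) = d * (d + 2) := by rw [transferV u' hu' hlaw' 4]; exact sv4
  -- independence of powers
  have hindk : ∀ k : ℕ, IndepFun (fun ω => ‖u' ω‖ ^ k) (fun ω => ‖u ω‖ ^ 2) P := by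
    intro k
    exact hind.symm.comp (measurable_norm.pow_const k) (measurable_norm.pow_const 2)
  have cross2 : Integrable (fun ω => ‖u' ω‖ ^ 2 * ‖u ω‖ ^ 2) P :=
    (hindk 2).integrable_mul iv2 iu2
  have cross4 : Integrable (fun ω => ‖u' ω‖ ^ 4 * ‖u ω‖ ^ 2) P :=
    (hindk 4).integrable_mul iv4 iu2
  have crossv2 : (∫ ω, ‖u' ω‖ ^ 2 * ‖u ω‖ ^ 2 ∂P) = (d : ℝ) * d := by
    have h := (hindk 2).integral_fun_mul_eq_mul_integral iv2.1 iu2.1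
    have h' : (∫ ω, ‖u' ω‖ ^ 2 * ‖u ω‖ ^ 2 ∂P)
        = (∫ ω, ‖u' ω‖ ^ 2 ∂P) * ∫ ω, ‖u ω‖ ^ 2 ∂P := h
    rw [h', vv2, vu2]
  have crossv4 : (∫ ω, ‖u' ω‖ ^ 4 * ‖u ω‖ ^ 2 ∂P) = ((d : ℝ) * (d + 2)) * d := by
    have h := (hindk 4).integral_fun_mul_eq_mul_integral iv4.1 iu2.1
    have h' : (∫ ω, ‖u' ω‖ ^ 4 * ‖u ω‖ ^ 2 ∂P)
        = (∫ ω, ‖u' ω‖ ^ 4 ∂P) * ∫ ω, ‖u ω‖ ^ 2 ∂P := h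
    rw [h', vv4, vu2]
  -- the bound function
  set c1 : ℝ := 4 * μ' ^ 2 * G ^ 2 with hc1
  set c2 : ℝ := L₁ ^ 2 * μ' ^ 4 with hc2
  have hIB1 : Integrable (fun ω => c2 * (‖u' ω‖ ^ 4 * ‖u ω‖ ^ 2)) P := cross4.const_mul c2
  have hIB2 : Integrable (fun ω => c1 * (‖u' ω‖ ^ 2 * ‖u ω‖ ^ 2)
      + c2 * (‖u' ω‖ ^ 4 * ‖u ω‖ ^ 2)) P := (cross2.const_mul c1).add hIB1
  have hIB3 : Integrable (fun ω => c2 * ‖u ω‖ ^ 6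
      + (c1 * (‖u' ω‖ ^ 2 * ‖u ω‖ ^ 2) + c2 * (‖u' ω‖ ^ 4 * ‖u ω‖ ^ 2))) P :=
    (iu6.const_mul c2).add hIB2
  have hIB : Integrable (fun ω => c1 * ‖u ω‖ ^ 4 + (c2 * ‖u ω‖ ^ 6
      + (c1 * (‖u' ω‖ ^ 2 * ‖u ω‖ ^ 2) + c2 * (‖u' ω‖ ^ 4 * ‖u ω‖ ^ 2)))) P :=
    (iu4.const_mul c1).add hIB3
  have step1 : (∫ ω, (f (x + μ • u ω) - f (x + μ' • u' ω)) ^ 2 * ‖u ω‖ ^ 2 ∂P)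
      ≤ ∫ ω, (c1 * ‖u ω‖ ^ 4 + (c2 * ‖u ω‖ ^ 6
        + (c1 * (‖u' ω‖ ^ 2 * ‖u ω‖ ^ 2) + c2 * (‖u' ω‖ ^ 4 * ‖u ω‖ ^ 2)))) ∂P := by
    apply integral_mono_of_nonneg (ae_of_all _ fun ω => by positivity) hIB
    apply ae_of_all
    intro ω
    calc (f (x + μ • u ω) - f (x + μ' • u' ω)) ^ 2 * ‖u ω‖ ^ 2
        ≤ (4 * μ' ^ 2 * G ^ 2 * ‖u ω‖ ^ 2 + L₁ ^ 2 * μ' ^ 4 * ‖u ω‖ ^ 4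
          + 4 * μ' ^ 2 * G ^ 2 * ‖u' ω‖ ^ 2 + L₁ ^ 2 * μ' ^ 4 * ‖u' ω‖ ^ 4) * ‖u ω‖ ^ 2 :=
          key2 (u ω) (u' ω)
      _ = c1 * ‖u ω‖ ^ 4 + (c2 * ‖u ω‖ ^ 6
          + (c1 * (‖u' ω‖ ^ 2 * ‖u ω‖ ^ 2) + c2 * (‖u' ω‖ ^ 4 * ‖u ω‖ ^ 2))) := by
          rw [hc1, hc2]; ring
  have step2 : (∫ ω, (c1 * ‖u ω‖ ^ 4 + (c2 * ‖u ω‖ ^ 6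
      + (c1 * (‖u' ω‖ ^ 2 * ‖u ω‖ ^ 2) + c2 * (‖u' ω‖ ^ 4 * ‖u ω‖ ^ 2)))) ∂P)
      = c1 * ((d : ℝ) * (d + 2)) + (c2 * ((d : ℝ) * (d + 2) * (d + 4))
        + (c1 * ((d : ℝ) * d) + c2 * (((d : ℝ) * (d + 2)) * d))) := by
    rw [integral_add (iu4.const_mul c1) hIB3, integral_add (iu6.const_mul c2) hIB2,
      integral_add (cross2.const_mul c1) hIB1,
      integral_const_mul, integral_const_mul, integral_const_mul, integral_const_mul,
      vu4, vu6, crossv2, crossv4]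
  refine le_trans step1 (le_trans (le_of_eq step2) ?_)
  have hD : (0:ℝ) ≤ (d:ℝ) := Nat.cast_nonneg d
  have hpoly1 : (d : ℝ) * (d + 2) + (d : ℝ) * d ≤ 2 * ((d : ℝ) + 4) ^ 2 := by nlinarith
  have hpoly2 : (d : ℝ) * (d + 2) * (d + 4) + ((d : ℝ) * (d + 2)) * d
      ≤ 2 * ((d : ℝ) + 6) ^ 3 := by nlinarith
  have hc1nn : (0:ℝ) ≤ c1 := by rw [hc1]; positivity
  have hc2nn : (0:ℝ) ≤ c2 := by rw [hc2]; positivity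
  calc c1 * ((d : ℝ) * (d + 2)) + (c2 * ((d : ℝ) * (d + 2) * (d + 4))
        + (c1 * ((d : ℝ) * d) + c2 * (((d : ℝ) * (d + 2)) * d)))
      = c1 * ((d : ℝ) * (d + 2) + (d : ℝ) * d)
        + c2 * ((d : ℝ) * (d + 2) * (d + 4) + ((d : ℝ) * (d + 2)) * d) := by ring
    _ ≤ c1 * (2 * ((d : ℝ) + 4) ^ 2) + c2 * (2 * ((d : ℝ) + 6) ^ 3) :=
        add_le_add (mul_le_mul_of_nonneg_left hpoly1 hc1nn)
          (mul_le_mul_of_nonneg_left hpoly2 hc2nn)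
    _ = 8 * μ' ^ 2 * ((d : ℝ) + 4) ^ 2 * G ^ 2 + 2 * L₁ ^ 2 * μ' ^ 4 * ((d : ℝ) + 6) ^ 3 := by
        rw [hc1, hc2]; ring

end
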